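/- Let G be a countable group with the property that for every unitary representation π of G not containing the trivial representation, the first cohomology H¹(G; π) vanishes. Then the abelianization G/[G,G] is finite. -/

import Mathlib

open Complex DirectSum
open scoped ENNReal

noncomputable section

namespace VH1


/-- The inclusion `ℚ/ℤ → ℝ/ℤ`. -/
def q2r : AddCircle (1:ℚ) →+ AddCircle (1:ℝ) :=
  QuotientAddGroup.map _ _ (Rat.castHom ℝ).toAddMonoidHom (by
    intro x hx
    rcases AddSubgroup.mem_zmultiples_iff.mp hx with ⟨k, hk⟩
    refine AddSubgroup.mem_comap.mpr (AddSubgroup.mem_zmultiples_iff.mpr ⟨k, ?_⟩)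
    simp [← hk])

@[simp] lemma q2r_coe (q : ℚ) : q2r (q : AddCircle (1:ℚ)) = ((q : ℝ) : AddCircle (1:ℝ)) := rfl

lemma q2r_injective : Function.Injective q2r := by
  intro x y hxy
  induction x using QuotientAddGroup.induction_on
  induction y using QuotientAddGroup.induction_on
  rename_i qx qy
  rw [q2r_coe, q2r_coe] at hxy
  have : ((qx - qy : ℚ) : AddCircle (1:ℚ)) = 0 := by
    rw [AddCircle.coe_eq_zero_iff]
    have h2 : (((qx - qy : ℚ) : ℝ) : AddCircle (1:ℝ)) = 0 := by
      have : ((qx - qy : ℚ) : ℝ) = (qx : ℝ) - (qy : ℝ) := by push_cast; ring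
      rw [this, AddCircle.coe_sub, sub_eq_zero]
      exact hxy
    rcases (AddCircle.coe_eq_zero_iff _).mp h2 with ⟨n, hn⟩
    refine ⟨n, ?_⟩
    have : ((n : ℚ) : ℝ) = (qx : ℝ) - (qy : ℝ) := by
      push_cast
      rw [zsmul_eq_mul, mul_one] at hn
      push_cast at hn
      linarith [hn]
    rw [zsmul_eq_mul, mul_one]
    exact_mod_cast this
  have := sub_eq_zero.mp (by rwa [AddCircle.coe_sub] at this)
  rw [this]

/-- The embedding of `ℚ/ℤ` into `ℂ` as roots-of-unity-style exponentials. -/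
def cplx (x : AddCircle (1:ℚ)) : ℂ := ((q2r x).toCircle : ℂ)

@[simp] lemma cplx_zero : cplx 0 = 1 := by
  simp [cplx, map_zero]

lemma cplx_add (x y : AddCircle (1:ℚ)) : cplx (x + y) = cplx x * cplx y := by
  simp [cplx, map_add, AddCircle.toCircle_add]

@[simp] lemma norm_cplx (x : AddCircle (1:ℚ)) : ‖cplx x‖ = 1 := by
  simp [cplx, Circle.norm_coe]

lemma cplx_injective : Function.Injective cplx :=
  fun _ _ h => q2r_injective (AddCircle.injective_toCircle one_ne_zero (Circle.coe_injective h))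

lemma cplx_eq_one_iff {x : AddCircle (1:ℚ)} : cplx x = 1 ↔ x = 0 := by
  constructor
  · intro h; apply cplx_injective; rw [h, cplx_zero]
  · rintro rfl; exact cplx_zero

lemma cplx_coe_bound (q : ℚ) (h : |(q:ℝ)| * (2 * Real.pi) ≤ 1) :
    ‖cplx (q : AddCircle (1:ℚ)) - 1‖ ≤ 4 * Real.pi * |(q:ℝ)| := by
  have hpi := Real.pi_pos
  rw [cplx, q2r_coe, AddCircle.toCircle_apply_mk, Circle.coe_exp]
  have habs : ‖((2 * Real.pi / 1 * (q:ℝ) : ℝ) : ℂ) * Complex.I‖ = 2 * Real.pi * |(q:ℝ)| := by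
    rw [norm_mul, Complex.norm_I, mul_one, Complex.norm_real, Real.norm_eq_abs]
    rw [abs_mul, abs_of_pos (by positivity : (0:ℝ) < 2 * Real.pi / 1)]
    ring
  calc ‖Complex.exp ((2 * Real.pi / 1 * (q:ℝ) : ℝ) * Complex.I) - 1‖
      ≤ 2 * ‖((2 * Real.pi / 1 * (q:ℝ) : ℝ) : ℂ) * Complex.I‖ := by
        apply Complex.norm_exp_sub_one_le
        rw [habs]; linarith [h]
    _ = 4 * Real.pi * |(q:ℝ)| := by rw [habs]; ring



abbrev E := lp (fun _ : ℕ => ℂ) 2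

lemma memE_of_mul {u : ℕ → ℂ} (hu : ∀ n, ‖u n‖ = 1) (x : E) :
    Memℓp (fun n => u n * (x : ∀ _ : ℕ, ℂ) n) 2 := by
  apply memℓp_gen
  have h := (lp.memℓp x).summable (by norm_num [ENNReal.toReal_pos_iff])
  convert h using 2 with n
  rw [norm_mul, hu n, one_mul]

/-- Diagonal unitary operator on `ℓ²(ℕ, ℂ)` determined by unimodular entries. -/
def diag (u : ℕ → ℂ) (hu : ∀ n, ‖u n‖ = 1) : E ≃ₗᵢ[ℂ] E :=
  { toFun := fun x => ⟨fun n => u n * x n, memE_of_mul hu x⟩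
    invFun := fun x => ⟨fun n => (u n)⁻¹ * x n,
      memE_of_mul (fun n => by rw [norm_inv, hu n, inv_one]) x⟩
    map_add' := fun x y => by
      apply lp.ext; funext n
      simp only [lp.coeFn_add, Pi.add_apply]
      exact mul_add _ _ _
    map_smul' := fun c x => by
      apply lp.ext; funext n
      simp only [lp.coeFn_smul, Pi.smul_apply, smul_eq_mul, RingHom.id_apply]
      ring
    left_inv := fun x => by
      apply lp.ext; funext n
      have : u n ≠ 0 := fun h => by simpa [h] using hu n
      simp only []
      field_simp
    right_inv := fun x => by
      apply lp.ext; funext n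
      have : u n ≠ 0 := fun h => by simpa [h] using hu n
      simp only []
      field_simp
    norm_map' := fun x => by
      rw [lp.norm_eq_tsum_rpow (by norm_num) , lp.norm_eq_tsum_rpow (by norm_num)]
      congr 1
      apply tsum_congr
      intro n
      congr 1
      show ‖u n * x n‖ = ‖x n‖
      rw [norm_mul, hu n, one_mul] }

@[simp] lemma diag_apply (u : ℕ → ℂ) (hu : ∀ n, ‖u n‖ = 1) (x : E) (n : ℕ) :
    (diag u hu x : ∀ _ : ℕ, ℂ) n = u n * x n := rfl

lemma exists_small_char (A : Type) [AddCommGroup A] [Infinite A] (S : Finset A) (ε : ℝ)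
    (hε : 0 < ε) :
    ∃ χ : A →+ AddCircle (1:ℚ), χ ≠ 0 ∧ ∀ a ∈ S, ‖cplx (χ a) - 1‖ ≤ ε := by
  by_cases hK : AddSubgroup.closure (S : Set A) = ⊤
  · -- A is finitely generated; use the structure theorem
    have hfg : AddGroup.FG A := AddGroup.fg_iff.mpr ⟨S, hK, S.finite_toSet⟩
    obtain ⟨n, ι, fι, p, hp, e, ⟨f⟩⟩ := AddCommGroup.equiv_free_prod_directSum_zmod A
    have hn : n ≠ 0 := by
      rintro rfl
      haveI : ∀ i, NeZero (p i ^ e i) := fun i => ⟨pow_ne_zero _ (hp i).pos.ne'⟩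
      haveI : ∀ i, Finite (ZMod (p i ^ e i)) := fun i => inferInstance
      haveI : Finite (⨁ i, ZMod (p i ^ e i)) := by
        have e1 : (⨁ i, ZMod (p i ^ e i)) ≃ ∀ i, ZMod (p i ^ e i) :=
          DFinsupp.equivFunOnFintype
        haveI : Finite (∀ i, ZMod (p i ^ e i)) := Pi.finite
        exact Finite.of_equiv (∀ i, ZMod (p i ^ e i)) e1.symm
      haveI : Finite (Fin 0 →₀ ℤ) := inferInstance
      haveI : Finite A := Finite.of_equiv ((Fin 0 →₀ ℤ) × ⨁ i, ZMod (p i ^ e i)) f.symm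
      exact not_finite A
    set i0 : Fin n := ⟨0, Nat.pos_of_ne_zero hn⟩
    set coord : A →+ ℤ :=
      (Finsupp.applyAddHom i0).comp ((AddMonoidHom.fst _ _).comp f.toAddMonoidHom) with hcoord
    set C : ℕ := S.sup (fun a => (coord a).natAbs) with hC
    obtain ⟨N, hN⟩ := exists_nat_gt
      (max (max ((C:ℝ) * (2*Real.pi)) ((4*Real.pi*(C:ℝ))/ε)) 1)
    have hN1 : (1:ℝ) < N := lt_of_le_of_lt (le_max_right _ _) hN
    have hNpos : (0:ℝ) < N := by linarith
    have hNQ : (0:ℚ) < (N:ℚ) := by exact_mod_cast (by exact_mod_cast hNpos : (0:ℝ) < (N:ℝ))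
    refine ⟨(zmultiplesHom _ (((1/(N:ℚ) : ℚ)) : AddCircle (1:ℚ))).comp coord, ?_, ?_⟩
    · -- nonzero
      intro h0
      have ha0 : coord (f.symm (Finsupp.single i0 1, 0)) = 1 := by
        simp [hcoord]
      have := congrArg (fun φ => φ (f.symm (Finsupp.single i0 1, 0))) h0
      simp only [AddMonoidHom.comp_apply, zmultiplesHom_apply, ha0, one_zsmul,
        AddMonoidHom.zero_apply] at this
      rcases (AddCircle.coe_eq_zero_iff _).mp this with ⟨k, hk⟩
      rw [zsmul_eq_mul, mul_one] at hk
      have h1 : (0:ℚ) < 1/(N:ℚ) := by positivity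
      have h2 : 1/(N:ℚ) < 1 := by
        rw [div_lt_one hNQ]
        exact_mod_cast (by exact_mod_cast hN1 : (1:ℚ) < (N:ℚ))
      have hk0 : (0:ℚ) < (k:ℚ) := by rw [hk]; exact h1
      have hk1 : (k:ℚ) < 1 := by rw [hk]; exact h2
      have : 0 < k := by exact_mod_cast hk0
      have : k < 1 := by exact_mod_cast hk1
      omega
    · intro a ha
      set m : ℤ := coord a with hm
      have hcoe : ((zmultiplesHom _ (((1/(N:ℚ) : ℚ)) : AddCircle (1:ℚ))).comp coord) a
          = (((m / (N:ℚ) : ℚ)) : AddCircle (1:ℚ)) := by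
        simp only [AddMonoidHom.comp_apply, zmultiplesHom_apply, ← hm]
        rw [← AddCircle.coe_zsmul]
        congr 1
        rw [zsmul_eq_mul]
        ring
      rw [hcoe]
      have hmC : |(m:ℝ)| ≤ (C:ℝ) := by
        have h1 : m.natAbs ≤ C := Finset.le_sup (f := fun a => (coord a).natAbs) ha
        rw [← Int.cast_abs, Int.abs_eq_natAbs]
        exact_mod_cast h1
      have hq : |((m / (N:ℚ) : ℚ) : ℝ)| = |(m:ℝ)| / (N:ℝ) := by
        push_cast
        rw [abs_div, abs_of_pos hNpos]
      have key1 : |((m / (N:ℚ) : ℚ) : ℝ)| * (2 * Real.pi) ≤ 1 := by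
        rw [hq]
        have h1 : (C:ℝ) * (2*Real.pi) < N := lt_of_le_of_lt (le_trans (le_max_left _ _) (le_max_left _ _)) hN
        rw [div_mul_eq_mul_div, div_le_one hNpos]
        calc |(m:ℝ)| * (2*Real.pi) ≤ (C:ℝ) * (2*Real.pi) := by
              have : (0:ℝ) ≤ 2*Real.pi := by positivity
              exact mul_le_mul_of_nonneg_right hmC this
          _ ≤ N := le_of_lt h1
      have key2 : 4 * Real.pi * |((m / (N:ℚ) : ℚ) : ℝ)| ≤ ε := by
        rw [hq]
        have h2 : (4*Real.pi*(C:ℝ))/ε < N := lt_of_le_of_lt (le_trans (le_max_right _ _) (le_max_left _ _)) hN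
        have : 4*Real.pi*(C:ℝ) < N * ε := by
          rw [div_lt_iff₀ hε] at h2; linarith
        rw [mul_div_assoc']
        rw [div_le_iff₀ hNpos]
        have h3 : 4*Real.pi*|(m:ℝ)| ≤ 4*Real.pi*(C:ℝ) :=
          mul_le_mul_of_nonneg_left hmC (by positivity)
        calc 4*Real.pi*|(m:ℝ)| ≤ 4*Real.pi*(C:ℝ) := h3
          _ ≤ N * ε := le_of_lt this
          _ = ε * N := by ring
      exact le_trans (cplx_coe_bound _ key1) key2
  · -- the closure is proper: kill it in a quotient
    rw [AddSubgroup.eq_top_iff'] at hK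
    push_neg at hK
    obtain ⟨a, haK⟩ := hK
    set K := AddSubgroup.closure (S : Set A)
    have hb : (QuotientAddGroup.mk' K a) ≠ 0 := by
      exact fun h => haK ((QuotientAddGroup.eq_zero_iff a).mp h)
    obtain ⟨c, hc⟩ := CharacterModule.exists_character_apply_ne_zero_of_ne_zero hb
    refine ⟨(c : A ⧸ K →ₗ[ℤ] AddCircle (1:ℚ)).toAddMonoidHom.comp (QuotientAddGroup.mk' K), ?_, ?_⟩
    · intro h0
      have := congrArg (fun φ => φ a) h0
      simp only [AddMonoidHom.comp_apply, AddMonoidHom.zero_apply] at this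
      exact hc this
    · intro x hx
      have hxK : x ∈ K := AddSubgroup.subset_closure hx
      have : (QuotientAddGroup.mk' K) x = 0 := by
        exact (QuotientAddGroup.eq_zero_iff x).mpr hxK
      simp only [AddMonoidHom.comp_apply, this, map_zero, cplx_zero, sub_self, norm_zero]
      positivity


end VH1

end

open VH1 in
/-- If every unitary representation of a countable group `G` without nonzero invariant
vectors has vanishing first cohomology (every 1-cocycle is a coboundary), then the
abelianization of `G` is finite. -/
theorem abelianization_finite_of_vanishing_H1
    {G : Type} [Group G] [Countable G]
    (h : ∀ (E : Type) [NormedAddCommGroup E] [InnerProductSpace ℂ E] [CompleteSpace E]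
      (π : G →* (E ≃ₗᵢ[ℂ] E)),
      (∀ ξ : E, (∀ g : G, π g ξ = ξ) → ξ = 0) →
      ∀ b : G → E, (∀ g g' : G, b (g * g') = b g + π g (b g')) →
        ∃ η : E, ∀ g : G, b g = η - π g η) :
    Finite (Abelianization G) := by
  classical
  by_contra hfin
  rw [not_finite_iff_infinite] at hfin
  set A := Additive (Abelianization G) with hA
  haveI : Infinite A := Infinite.of_injective Additive.ofMul Additive.ofMul.injective
  let aG : G → A := fun g => Additive.ofMul (Abelianization.of g)
  have haG : ∀ g g' : G, aG (g * g') = aG g + aG g' := by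
    intro g g'
    show Additive.ofMul (Abelianization.of (g * g')) = _
    rw [map_mul]
    rfl
  have haGsurj : ∀ x : A, ∃ g : G, aG g = x := by
    intro x
    obtain ⟨g, hg⟩ : ∃ g : G, Abelianization.of g = Additive.toMul x :=
      QuotientGroup.induction_on (Additive.toMul x) fun g => ⟨g, rfl⟩
    exact ⟨g, by simp [aG, hg]⟩
  obtain ⟨gs, hgs⟩ := exists_surjective_nat G
  have hchar : ∀ n : ℕ, ∃ χ : A →+ AddCircle (1:ℚ), χ ≠ 0 ∧
      ∀ k, k ≤ n → ‖cplx (χ (aG (gs k))) - 1‖ ≤ (4:ℝ)⁻¹ ^ n := by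
    intro n
    obtain ⟨χ, h1, h2⟩ := exists_small_char A
      ((Finset.range (n+1)).image fun k => aG (gs k)) ((4:ℝ)⁻¹ ^ n) (by positivity)
    refine ⟨χ, h1, fun k hk => h2 (aG (gs k)) ?_⟩
    exact Finset.mem_image_of_mem _ (Finset.mem_range.mpr (by omega))
  choose χ hχ0 hχ using hchar
  let u : G → ℕ → ℂ := fun g n => cplx (χ n (aG g))
  have hu : ∀ g n, ‖u g n‖ = 1 := fun g n => norm_cplx _
  have humul : ∀ g g' n, u (g * g') n = u g n * u g' n := by
    intro g g' n
    show cplx (χ n (aG (g * g'))) = _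
    rw [haG, map_add, cplx_add]
  have hune : ∀ n, ∃ g, u g n ≠ 1 := by
    intro n
    have hex : ∃ x : A, χ n x ≠ 0 := by
      by_contra hc
      push_neg at hc
      exact hχ0 n (by ext x; simp [hc])
    obtain ⟨x, hx⟩ := hex
    obtain ⟨g, rfl⟩ := haGsurj x
    exact ⟨g, fun hh => hx (cplx_eq_one_iff.mp hh)⟩
  let π : G →* (E ≃ₗᵢ[ℂ] E) := MonoidHom.mk' (fun g => diag (u g) (hu g)) (by
    intro g g'
    apply LinearIsometryEquiv.ext
    intro x
    apply lp.ext
    funext n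
    have h1 : ((diag (u g) (hu g) * diag (u g') (hu g')) x : ∀ _ : ℕ, ℂ) n
        = u g n * (u g' n * (x : ∀ _ : ℕ, ℂ) n) := rfl
    rw [h1]
    show u (g * g') n * (x : ∀ _ : ℕ, ℂ) n = _
    rw [humul]; ring)
  have hπ : ∀ (g : G) (x : E) (n : ℕ), (π g x : ∀ _ : ℕ, ℂ) n = u g n * x n :=
    fun _ _ _ => rfl
  let c : ℕ → ℝ := fun n => Real.sqrt 2 ^ n
  have hcpos : ∀ n, 0 < c n := fun n => pow_pos (Real.sqrt_pos.mpr (by norm_num)) n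
  have hc2 : ∀ n, c n ^ 2 = 2 ^ n := by
    intro n
    show (Real.sqrt 2 ^ n) ^ 2 = 2 ^ n
    rw [← pow_mul, mul_comm, pow_mul, Real.sq_sqrt (by norm_num : (0:ℝ) ≤ 2)]
  have hrpow : ∀ x : ℝ, x ^ ((2:ℝ≥0∞)).toReal = x ^ (2:ℕ) := by
    intro x
    have h2 : ((2:ℝ≥0∞)).toReal = ((2:ℕ):ℝ) := by norm_num
    rw [h2, Real.rpow_natCast]
  have hnorm_c : ∀ n, ‖((c n : ℝ) : ℂ)‖ = c n := by
    intro n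
    rw [Complex.norm_real, Real.norm_eq_abs, abs_of_pos (hcpos n)]
  have hbound : ∀ (k m : ℕ), k ≤ m → ‖(c m : ℂ) * (1 - u (gs k) m)‖ ^ (2:ℕ) ≤ (8:ℝ)⁻¹ ^ m := by
    intro k m hkm
    have h1 : ‖1 - u (gs k) m‖ ≤ (4:ℝ)⁻¹ ^ m := by
      rw [norm_sub_rev]
      exact hχ m k hkm
    have h2 : ‖(c m : ℂ) * (1 - u (gs k) m)‖ ^ (2:ℕ)
        = (2:ℝ) ^ m * ‖1 - u (gs k) m‖ ^ (2:ℕ) := by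
      rw [norm_mul, mul_pow, hnorm_c, hc2]
    rw [h2]
    have h3 : ‖1 - u (gs k) m‖ ^ (2:ℕ) ≤ ((4:ℝ)⁻¹ ^ m) ^ (2:ℕ) :=
      pow_le_pow_left₀ (norm_nonneg _) h1 2
    calc (2:ℝ) ^ m * ‖1 - u (gs k) m‖ ^ (2:ℕ) ≤ (2:ℝ) ^ m * ((4:ℝ)⁻¹ ^ m) ^ (2:ℕ) := by
          exact mul_le_mul_of_nonneg_left h3 (by positivity)
      _ = (8:ℝ)⁻¹ ^ m := by
          rw [← pow_mul, mul_comm m 2, pow_mul, ← mul_pow]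
          norm_num
  have hmem : ∀ g : G, Memℓp (fun n => (c n : ℂ) * (1 - u g n)) 2 := by
    intro g
    obtain ⟨k, rfl⟩ := hgs g
    apply memℓp_gen
    have hs : Summable fun n : ℕ => ‖(c n : ℂ) * (1 - u (gs k) n)‖ ^ (2:ℕ) := by
      refine (summable_nat_add_iff k).mp ?_
      refine Summable.of_nonneg_of_le (fun n => by positivity) (fun n => ?_)
        ((summable_geometric_of_lt_one (by norm_num) (by norm_num :
          (8:ℝ)⁻¹ < 1)))
      calc ‖(c (n + k) : ℂ) * (1 - u (gs k) (n + k))‖ ^ (2:ℕ) ≤ (8:ℝ)⁻¹ ^ (n + k) :=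
            hbound k (n + k) (Nat.le_add_left k n)
        _ ≤ (8:ℝ)⁻¹ ^ n := by
            rw [pow_add]
            have : (8:ℝ)⁻¹ ^ k ≤ 1 := pow_le_one₀ (by norm_num) (by norm_num)
            nlinarith [pow_nonneg (by norm_num : (0:ℝ) ≤ 8⁻¹) n, pow_nonneg (by norm_num : (0:ℝ) ≤ 8⁻¹) k]
    refine hs.congr fun n => ?_
    rw [hrpow]
  let bb : G → E := fun g => ⟨fun n => (c n : ℂ) * (1 - u g n), hmem g⟩
  have hbb : ∀ g n, (bb g : ∀ _ : ℕ, ℂ) n = (c n : ℂ) * (1 - u g n) := fun _ _ => rfl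
  have hinv : ∀ ξ : E, (∀ g : G, π g ξ = ξ) → ξ = 0 := by
    intro ξ hξ
    apply lp.ext
    funext n
    obtain ⟨g, hg⟩ := hune n
    have h1 : u g n * (ξ : ∀ _ : ℕ, ℂ) n = (ξ : ∀ _ : ℕ, ℂ) n := by
      conv_rhs => rw [← hξ g]
      rw [hπ]
    have h2 : (u g n - 1) * (ξ : ∀ _ : ℕ, ℂ) n = 0 := by
      rw [sub_mul, one_mul, h1, sub_self]
    show (ξ : ∀ _ : ℕ, ℂ) n = (0 : E) n
    rcases mul_eq_zero.mp h2 with h3 | h3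
    · exact absurd (by rwa [sub_eq_zero] at h3) hg
    · rw [h3]; simp
  have hcoc : ∀ g g' : G, bb (g * g') = bb g + π g (bb g') := by
    intro g g'
    apply lp.ext
    funext n
    rw [lp.coeFn_add, Pi.add_apply, hbb, hπ, hbb, hbb, humul]
    ring
  obtain ⟨η, hη⟩ := h E π hinv bb hcoc
  have hηn : ∀ n, (η : ∀ _ : ℕ, ℂ) n = (c n : ℂ) := by
    intro n
    obtain ⟨g, hg⟩ := hune n
    have h1 : (c n : ℂ) * (1 - u g n)
        = (η : ∀ _ : ℕ, ℂ) n - u g n * (η : ∀ _ : ℕ, ℂ) n := by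
      rw [← hbb g n, hη g, lp.coeFn_sub, Pi.sub_apply, hπ]
    have h2 : ((c n : ℂ) - (η : ∀ _ : ℕ, ℂ) n) * (1 - u g n) = 0 := by
      ring_nf
      ring_nf at h1
      linear_combination h1
    rcases mul_eq_zero.mp h2 with h3 | h3
    · exact (sub_eq_zero.mp h3).symm
    · exact absurd (by rw [← sub_eq_zero]; linear_combination -h3) hg
  have hsum := (lp.memℓp η).summable (p := 2) (by norm_num)
  have hsum2 : Summable fun n : ℕ => (2:ℝ) ^ n := by
    refine hsum.congr fun n => ?_
    rw [hrpow, hηn, hnorm_c, hc2]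
  have := summable_geometric_iff_norm_lt_one.mp hsum2
  rw [Real.norm_eq_abs] at this
  norm_num at this
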